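/- Let f = p~/p be a finite Blaschke product with zeros in the open disk. Then the zero set of F(z,w) = (p(z)p~(w) − p(w)p~(z))/(z−w) in ℂ² is contained in (𝔻×𝔻) ∪ (𝕋×𝕋) ∪ (𝔼×𝔼), where 𝔻 is the open unit disk, 𝕋 the unit circle, 𝔼 the exterior {|z|>1} (restricting to points where p(z)p(w) ≠ 0). -/

import Mathlib

open Complex Finset

lemma factor_id (a z : ℂ) :
    Complex.normSq (1 - (starRingEnd ℂ) a * z) - Complex.normSq (z - a)
      = (1 - Complex.normSq a) * (1 - Complex.normSq z) := by
  simp only [Complex.normSq_apply, Complex.sub_re, Complex.sub_im, Complex.mul_re,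
    Complex.mul_im, Complex.one_re, Complex.one_im, Complex.conj_re, Complex.conj_im]
  ring

lemma abs_normSq_lt (z : ℂ) : ‖z‖ < 1 ↔ Complex.normSq z < 1 := by
  rw [Complex.normSq_eq_norm_sq]
  constructor <;> intro h <;> nlinarith [norm_nonneg z]

lemma abs_normSq_eq (z : ℂ) : ‖z‖ = 1 ↔ Complex.normSq z = 1 := by
  rw [Complex.normSq_eq_norm_sq]
  constructor <;> intro h <;> nlinarith [norm_nonneg z]

lemma abs_normSq_gt (z : ℂ) : 1 < ‖z‖ ↔ 1 < Complex.normSq z := by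
  rw [Complex.normSq_eq_norm_sq]
  constructor <;> intro h <;> nlinarith [norm_nonneg z]

lemma key_lt {m : ℕ} (hm : 0 < m) (α : Fin m → ℂ) (hα : ∀ i, ‖α i‖ < 1)
    (z : ℂ) (hz : Complex.normSq z < 1) :
    Complex.normSq (∏ i, (z - α i)) < Complex.normSq (∏ i, (1 - (starRingEnd ℂ) (α i) * z)) := by
  rw [map_prod, map_prod]
  have hstep : ∀ i : Fin m, Complex.normSq (z - α i) < Complex.normSq (1 - (starRingEnd ℂ) (α i) * z) := by
    intro i
    have h1 : Complex.normSq (α i) < 1 := (abs_normSq_lt _).mp (hα i)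
    nlinarith [factor_id (α i) z]
  by_cases hall : ∀ i : Fin m, 0 < Complex.normSq (z - α i)
  · exact Finset.prod_lt_prod_of_nonempty (fun i _ => hall i) (fun i _ => hstep i)
      (Finset.univ_nonempty_iff.mpr (Fin.pos_iff_nonempty.mp hm))
  · push_neg at hall
    obtain ⟨i, hi⟩ := hall
    have hi0 : Complex.normSq (z - α i) = 0 := le_antisymm hi (Complex.normSq_nonneg _)
    rw [Finset.prod_eq_zero (Finset.mem_univ i) hi0]
    exact Finset.prod_pos fun j _ => lt_of_le_of_lt (Complex.normSq_nonneg _) (hstep j)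

lemma key_eq {m : ℕ} (α : Fin m → ℂ) (hα : ∀ i, ‖α i‖ < 1) (z : ℂ) (hz : Complex.normSq z = 1) :
    Complex.normSq (∏ i, (z - α i)) = Complex.normSq (∏ i, (1 - (starRingEnd ℂ) (α i) * z)) := by
  rw [map_prod, map_prod]
  refine Finset.prod_congr rfl fun i _ => ?_
  have := factor_id (α i) z
  rw [hz] at this
  linarith

lemma key_gt {m : ℕ} (hm : 0 < m) (α : Fin m → ℂ) (hα : ∀ i, ‖α i‖ < 1) (z : ℂ) (hz : 1 < Complex.normSq z)
    (hnz : ∀ i : Fin m, (1 - (starRingEnd ℂ) (α i) * z) ≠ 0) :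
    Complex.normSq (∏ i, (1 - (starRingEnd ℂ) (α i) * z)) < Complex.normSq (∏ i, (z - α i)) := by
  rw [map_prod, map_prod]
  refine Finset.prod_lt_prod_of_nonempty (fun i _ => Complex.normSq_pos.mpr (hnz i))
    (fun i _ => ?_) (Finset.univ_nonempty_iff.mpr (Fin.pos_iff_nonempty.mp hm))
  have h1 : Complex.normSq (α i) < 1 := (abs_normSq_lt _).mp (hα i)
  nlinarith [factor_id (α i) z]


/-- The zero set of `F(z,w) = (p(z)p~(w) − p(w)p~(z))/(z−w)` for a finite Blaschke
product `f = p~/p` is contained in `(𝔻×𝔻) ∪ (𝕋×𝕋) ∪ (𝔼×𝔼)` (at points where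
`p(z)p(w) ≠ 0`). -/
theorem stmt_12 (m : ℕ) (hm : 0 < m) (α : Fin m → ℂ)
    (hα : ∀ i, ‖α i‖ < 1)
    (p pt : ℂ → ℂ)
    (hp : ∀ z : ℂ, p z = ∏ i, (1 - (starRingEnd ℂ) (α i) * z))
    (hpt : ∀ z : ℂ, pt z = ∏ i, (z - α i))
    (F : ℂ → ℂ → ℂ)
    (hF : ∀ z w : ℂ, (z - w) * F z w = p z * pt w - p w * pt z)
    (z w : ℂ) (hden : p z * p w ≠ 0) (hzero : F z w = 0) :
    (‖z‖ < 1 ∧ ‖w‖ < 1) ∨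
    (‖z‖ = 1 ∧ ‖w‖ = 1) ∨
    (1 < ‖z‖ ∧ 1 < ‖w‖) := by
  have hpz : p z ≠ 0 := fun h => hden (by rw [h, zero_mul])
  have hpw : p w ≠ 0 := fun h => hden (by rw [h, mul_zero])
  have heq : p z * pt w = p w * pt z := by
    have := hF z w
    rw [hzero, mul_zero] at this
    linear_combination -this
  -- factor nonvanishing
  have hnzz : ∀ i : Fin m, (1 - (starRingEnd ℂ) (α i) * z) ≠ 0 := by
    intro i hi
    exact hpz (by rw [hp]; exact Finset.prod_eq_zero (Finset.mem_univ i) hi)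
  have hnzw : ∀ i : Fin m, (1 - (starRingEnd ℂ) (α i) * w) ≠ 0 := by
    intro i hi
    exact hpw (by rw [hp]; exact Finset.prod_eq_zero (Finset.mem_univ i) hi)
  set A := Complex.normSq (p z) with hA
  set B := Complex.normSq (p w) with hB
  set C := Complex.normSq (pt z) with hC
  set D := Complex.normSq (pt w) with hD
  have hA0 : 0 < A := Complex.normSq_pos.mpr hpz
  have hB0 : 0 < B := Complex.normSq_pos.mpr hpw
  have hC0 : 0 ≤ C := Complex.normSq_nonneg _
  have hD0 : 0 ≤ D := Complex.normSq_nonneg _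
  have hprod : A * D = B * C := by
    rw [hA, hB, hC, hD, ← map_mul, ← map_mul, heq]
  have kz_lt : Complex.normSq z < 1 → C < A := by
    intro h; rw [hC, hA, hpt, hp]; exact key_lt hm α hα z h
  have kz_eq : Complex.normSq z = 1 → C = A := by
    intro h; rw [hC, hA, hpt, hp]; exact key_eq α hα z h
  have kz_gt : 1 < Complex.normSq z → A < C := by
    intro h; rw [hC, hA, hpt, hp]; exact key_gt hm α hα z h hnzz
  have kw_lt : Complex.normSq w < 1 → D < B := by
    intro h; rw [hD, hB, hpt, hp]; exact key_lt hm α hα w h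
  have kw_eq : Complex.normSq w = 1 → D = B := by
    intro h; rw [hD, hB, hpt, hp]; exact key_eq α hα w h
  have kw_gt : 1 < Complex.normSq w → B < D := by
    intro h; rw [hD, hB, hpt, hp]; exact key_gt hm α hα w h hnzw
  rcases lt_trichotomy (Complex.normSq z) 1 with hz | hz | hz <;>
    rcases lt_trichotomy (Complex.normSq w) 1 with hw | hw | hw
  · exact Or.inl ⟨(abs_normSq_lt z).mpr hz, (abs_normSq_lt w).mpr hw⟩
  · exact absurd hprod (by have := kz_lt hz; have := kw_eq hw; nlinarith)
  · exact absurd hprod (by have := kz_lt hz; have := kw_gt hw; nlinarith)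
  · exact absurd hprod (by have := kz_eq hz; have := kw_lt hw; nlinarith)
  · exact Or.inr (Or.inl ⟨(abs_normSq_eq z).mpr hz, (abs_normSq_eq w).mpr hw⟩)
  · exact absurd hprod (by have := kz_eq hz; have := kw_gt hw; nlinarith)
  · exact absurd hprod (by have := kz_gt hz; have := kw_lt hw; nlinarith)
  · exact absurd hprod (by have := kz_gt hz; have := kw_eq hw; nlinarith)
  · exact Or.inr (Or.inr ⟨(abs_normSq_gt z).mpr hz, (abs_normSq_gt w).mpr hw⟩)
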